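/- arXiv:1305.4101 — 3 statements merged into one kernel-verified Lean document; each statement's English description precedes it below -/
import Mathlib

section
/- Let x, y, z be complex numbers satisfying the triangle inequalities ||x| − |y|| ≤ |z| ≤ |x| + |y|. Then there exist real numbers α₁ and α₂ such that x·e^{iα₁} + y·e^{iα₂} = z. -/
open Complex

private lemma rot_exists (x u : ℂ) (h : ‖u‖ = ‖x‖) :
    ∃ α : ℝ, x * Complex.exp (Complex.I * (α : ℂ)) = u := by
  by_cases hx : x = 0
  · refine ⟨0, ?_⟩
    have hu : u = 0 := by
      have := h; rw [hx, norm_zero] at this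
      exact norm_eq_zero.mp this
    simp [hx, hu]
  · refine ⟨u.arg - x.arg, ?_⟩
    have hx' := Complex.norm_mul_exp_arg_mul_I x
    have hu' := Complex.norm_mul_exp_arg_mul_I u
    calc x * Complex.exp (Complex.I * ((u.arg - x.arg : ℝ) : ℂ))
        = (‖x‖ : ℂ) * Complex.exp ((x.arg : ℂ) * Complex.I) *
            Complex.exp (Complex.I * ((u.arg - x.arg : ℝ) : ℂ)) := by rw [hx']
      _ = (‖u‖ : ℂ) * Complex.exp ((u.arg : ℂ) * Complex.I) := by
            rw [← h, mul_assoc, ← Complex.exp_add]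
            congr 1
            push_cast
            ring
      _ = u := hu'

private lemma split_exists (z : ℂ) (a b : ℝ) (ha : 0 ≤ a) (hb : 0 ≤ b)
    (h1 : |a - b| ≤ ‖z‖) (h2 : ‖z‖ ≤ a + b) :
    ∃ u v : ℂ, ‖u‖ = a ∧ ‖v‖ = b ∧ u + v = z := by
  set c := ‖z‖ with hc
  by_cases hz : z = 0
  · have hc0 : c = 0 := by simp [hc, hz]
    have hab : a = b := by
      rw [hc0] at h1
      have := abs_nonneg (a - b)
      have : |a - b| = 0 := le_antisymm h1 this
      have := abs_eq_zero.mp this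
      linarith
    refine ⟨(a : ℂ), -(a : ℂ), ?_, ?_, by simp [hz]⟩
    · simp [Complex.norm_real, _root_.abs_of_nonneg ha]
    · simp [Complex.norm_real, _root_.abs_of_nonneg ha, ← hab]
  · have hcpos : 0 < c := by
      simpa [hc] using (norm_pos_iff.mpr hz)
    by_cases haz : a = 0
    · have hbc : c = b := by
        subst haz
        rw [abs_of_nonpos (by linarith)] at h1
        simp at h1 h2 ⊢
        linarith
      exact ⟨0, z, by simp [haz], by rw [← hc, hbc], by simp⟩
    · have hapos : 0 < a := lt_of_le_of_ne ha (Ne.symm haz)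
      -- triangle bounds
      have hac1 : |a - c| ≤ b := by
        rw [abs_le]
        constructor
        · linarith
        · have : a - b ≤ |a - b| := le_abs_self _
          linarith
      have hac2 : b ≤ a + c := by
        have : b - a ≤ |a - b| := by rw [abs_sub_comm]; exact le_abs_self _
        linarith
      set t : ℝ := (a ^ 2 + c ^ 2 - b ^ 2) / (2 * a * c) with ht
      have h2ac : 0 < 2 * a * c := by positivity
      have hacb := abs_le.mp hac1
      have hsq : (a - c) ^ 2 ≤ b ^ 2 := sq_le_sq' (by linarith) hacb.2
      have ht1 : t ≤ 1 := by
        rw [ht, div_le_one h2ac]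
        nlinarith
      have ht2 : -1 ≤ t := by
        rw [ht, le_div_iff₀ h2ac]
        nlinarith [sq_nonneg (a + c - b)]
      set θ : ℝ := Real.arccos t with hθ
      have hcos : Real.cos θ = t := Real.cos_arccos ht2 ht1
      set e : ℂ := (Real.cos θ : ℂ) + (Real.sin θ : ℂ) * Complex.I with he
      have habse : ‖e‖ = 1 := by
        have hn : Complex.normSq e = 1 := by
          simp only [he, Complex.normSq_apply, Complex.add_re, Complex.add_im,
            Complex.mul_re, Complex.mul_im, Complex.ofReal_re, Complex.ofReal_im,
            Complex.I_re, Complex.I_im]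
          nlinarith [Real.sin_sq_add_cos_sq θ]
        rw [Complex.norm_def, hn, Real.sqrt_one]
      set u : ℂ := ((a / c : ℝ) : ℂ) * z * e with hu
      have habsu : ‖u‖ = a := by
        rw [hu, norm_mul, norm_mul, habse, Complex.norm_real, Real.norm_eq_abs, ← hc,
          _root_.abs_of_nonneg (by positivity : (0:ℝ) ≤ a / c)]
        field_simp
      refine ⟨u, z - u, habsu, ?_, by ring⟩
      -- compute |z - u|
      have hre : (z * (starRingEnd ℂ) u).re = a * c * Real.cos θ := by
        have hzz : z * (starRingEnd ℂ) z = (Complex.normSq z : ℂ) := Complex.mul_conj z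
        have : z * (starRingEnd ℂ) u
            = ((a / c : ℝ) : ℂ) * (Complex.normSq z : ℂ) *
              ((Real.cos θ : ℂ) - (Real.sin θ : ℂ) * Complex.I) := by
          rw [hu, he]
          simp only [map_mul, map_add, Complex.conj_ofReal, Complex.conj_I]
          rw [show z * (((a / c : ℝ) : ℂ) * (starRingEnd ℂ) z *
              ((Real.cos θ : ℂ) + (Real.sin θ : ℂ) * -Complex.I))
            = ((a / c : ℝ) : ℂ) * (z * (starRingEnd ℂ) z) *
              ((Real.cos θ : ℂ) - (Real.sin θ : ℂ) * Complex.I) by ring, hzz]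
        rw [this]
        have hnsq : Complex.normSq z = c ^ 2 := by
          rw [hc, Complex.sq_norm]
        rw [hnsq]
        simp only [Complex.mul_re, Complex.mul_im, Complex.sub_re, Complex.sub_im,
          Complex.ofReal_re, Complex.ofReal_im, Complex.I_re, Complex.I_im]
        field_simp
        ring
      have hnsq : Complex.normSq (z - u) = b ^ 2 := by
        rw [Complex.normSq_sub, hre]
        have h1' : Complex.normSq z = c ^ 2 := by rw [hc, Complex.sq_norm]
        have h2' : Complex.normSq u = a ^ 2 := by rw [← Complex.sq_norm, habsu]
        rw [h1', h2', hcos, ht]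
        field_simp
        ring
      have : ‖z - u‖ ^ 2 = b ^ 2 := by
        rw [Complex.sq_norm, hnsq]
      have habs := norm_nonneg (z - u)
      nlinarith [this]

/-- If `||x| - |y|| ≤ |z| ≤ |x| + |y|`, then the triangle equation
`x·e^{iα₁} + y·e^{iα₂} = z` has a solution in real numbers `α₁, α₂`. -/
theorem triangle_equation_solvable (x y z : ℂ)
    (h1 : |‖x‖ - ‖y‖| ≤ ‖z‖)
    (h2 : ‖z‖ ≤ ‖x‖ + ‖y‖) :
    ∃ α₁ α₂ : ℝ,
      x * Complex.exp (Complex.I * (α₁ : ℂ)) + y * Complex.exp (Complex.I * (α₂ : ℂ)) = z := by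
  obtain ⟨u, v, hu, hv, huv⟩ := split_exists z (‖x‖) (‖y‖)
    (norm_nonneg x) (norm_nonneg y) h1 h2
  obtain ⟨α₁, hα₁⟩ := rot_exists x u hu
  obtain ⟨α₂, hα₂⟩ := rot_exists y v hv
  exact ⟨α₁, α₂, by rw [hα₁, hα₂, huv]⟩
end

section
/- Let x, y, z be nonzero complex numbers with strict triangle inequalities ||x| − |y|| < |z| < |x| + |y|. Then the set of pairs of unit complex numbers (u, v) with x·u + y·v = z has exactly two elements; i.e., the triangle equation x·e^{iα₁} + y·e^{iα₂} = z has exactly two solutions up to the identification (α₁, α₂) ↦ (e^{iα₁}, e^{iα₂}). -/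
open ComplexConjugate

/-- For nonzero `x, y, z` with strict triangle inequalities
`||x| - |y|| < |z| < |x| + |y|`, the triangle equation `x·u + y·v = z` has exactly two
solutions in pairs of unit complex numbers `(u, v)`. -/
theorem triangle_equation_two_solutions (x y z : ℂ)
    (hx : x ≠ 0) (hy : y ≠ 0) (hz : z ≠ 0)
    (h1 : |‖x‖ - ‖y‖| < ‖z‖)
    (h2 : ‖z‖ < ‖x‖ + ‖y‖) :
    {p : ℂ × ℂ | ‖p.1‖ = 1 ∧ ‖p.2‖ = 1 ∧
      x * p.1 + y * p.2 = z}.encard = 2 := by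
  obtain ⟨h1a, h1b⟩ := abs_lt.mp h1
  set ax := ‖x‖ with hax
  set ay := ‖y‖ with hay
  set az := ‖z‖ with haz
  have hax0 : 0 < ax := norm_pos_iff.mpr hx
  have hay0 : 0 < ay := norm_pos_iff.mpr hy
  have haz0 : 0 < az := norm_pos_iff.mpr hz
  set d : ℝ := (az^2 + ax^2 - ay^2)/2 with hd
  have hdlt : d < ax*az := by
    nlinarith [mul_pos (show (0:ℝ) < ay + ax - az by linarith)
      (show (0:ℝ) < ay + az - ax by linarith)]
  have hdgt : -(ax*az) < d := by
    nlinarith [mul_pos (show (0:ℝ) < az + ax - ay by linarith)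
      (show (0:ℝ) < az + ax + ay by linarith)]
  set e : ℝ := Real.sqrt ((ax*az)^2 - d^2) with hedef
  have hd2 : d^2 < (ax*az)^2 := sq_lt_sq' hdgt hdlt
  have he0 : 0 < e := Real.sqrt_pos.mpr (by linarith)
  have he2 : e^2 = (ax*az)^2 - d^2 := Real.sq_sqrt (by linarith)
  have hcz : conj z ≠ 0 := by simp [hz]
  have hc2 : x * conj z ≠ 0 := mul_ne_zero hx hcz
  set u₀ : ℂ := ((d:ℂ) - e*Complex.I)/(x * conj z) with hu₀
  set u₁ : ℂ := ((d:ℂ) + e*Complex.I)/(x * conj z) with hu₁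
  -- abs facts
  have hc2abs : ‖x * conj z‖ = ax*az := by
    rw [norm_mul, Complex.norm_conj]
  have habsn : ∀ t : ℝ, t^2 = e^2 → ‖(d:ℂ) + t*Complex.I‖ = ax*az := by
    intro t ht
    rw [Complex.norm_add_mul_I, ht, he2]
    rw [show d^2 + ((ax*az)^2 - d^2) = (ax*az)^2 by ring]
    exact Real.sqrt_sq (by positivity)
  have habsu₀ : ‖u₀‖ = 1 := by
    rw [hu₀, norm_div, hc2abs,
      show ((d:ℂ) - e*Complex.I) = (d:ℂ) + (-e : ℝ)*Complex.I by push_cast; ring,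
      habsn (-e) (by ring)]
    field_simp
  have habsu₁ : ‖u₁‖ = 1 := by
    rw [hu₁, norm_div, hc2abs, habsn e rfl]
    field_simp
  -- complex algebra facts
  have hzz : z * conj z = ((az:ℝ):ℂ)^2 := by
    rw [Complex.mul_conj]; norm_cast; exact (Complex.sq_norm z).symm
  have hxx : x * conj x = ((ax:ℝ):ℂ)^2 := by
    rw [Complex.mul_conj]; norm_cast; exact (Complex.sq_norm x).symm
  have hyy : y * conj y = ((ay:ℝ):ℂ)^2 := by
    rw [Complex.mul_conj]; norm_cast; exact (Complex.sq_norm y).symm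
  have hDc : 2*(d:ℂ) = ((az:ℝ):ℂ)^2 + ((ax:ℝ):ℂ)^2 - ((ay:ℝ):ℂ)^2 := by
    rw [hd]; push_cast; ring
  have hEc : ((e:ℝ):ℂ)^2 = ((ax:ℝ):ℂ)^2*((az:ℝ):ℂ)^2 - ((d:ℝ):ℂ)^2 := by
    have : (e:ℝ)^2 = ax^2*az^2 - d^2 := by rw [he2]; ring
    exact_mod_cast this
  have hIsq : Complex.I^2 = -1 := Complex.I_sq
  have hsum' : x * conj z * (u₀ + u₁) = 2*(d:ℂ) := by
    rw [hu₀, hu₁, ← add_div, mul_div_cancel₀ _ hc2]; ring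
  have hnum : ((d:ℂ) - e*Complex.I)*((d:ℂ) + e*Complex.I) = (x*conj z) * (z*conj x) := by
    linear_combination (-((e:ℝ):ℂ)^2) * hIsq + hEc - (x*conj x)*hzz - (((az:ℝ):ℂ)^2)*hxx
  have hprod : x * conj z * (u₀ * u₁) = z * conj x := by
    rw [hu₀, hu₁, div_mul_div_comm, mul_div_assoc']
    rw [div_eq_iff (by exact mul_ne_zero hc2 hc2)]
    linear_combination (x * conj z) * hnum
  have key : ∀ u : ℂ, x * conj z * u^2 - 2*(d:ℂ)*u + z * conj x
      = x * conj z * ((u - u₀) * (u - u₁)) := by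
    intro u
    linear_combination u * hsum' - hprod
  -- membership lemma for roots
  have hmem : ∀ u : ℂ, ‖u‖ = 1 →
      x * conj z * u^2 - 2*(d:ℂ)*u + z * conj x = 0 →
      (‖(z - x*u)/y‖ = 1 ∧ x*u + y*((z - x*u)/y) = z) := by
    intro u hu hquad
    have hcu : u * conj u = 1 := by
      rw [Complex.mul_conj]
      norm_cast
      rw [← Complex.sq_norm, hu]; norm_num
    have hn : (z - x*u) * conj (z - x*u) = ((ay:ℝ):ℂ)^2 := by
      rw [map_sub, map_mul]
      linear_combination (-(conj u)) * hquad + (x*conj x + x*conj z*u - 2*(d:ℂ)) * hcu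
        + hzz + hxx - hDc
    have hn' : ‖z - x*u‖ = ay := by
      have h3 : ((Complex.normSq (z-x*u) : ℝ) : ℂ) = (((ay^2:ℝ)) : ℂ) := by
        rw [← Complex.mul_conj, hn]; push_cast; ring
      have h4 : Complex.normSq (z-x*u) = ay^2 := by exact_mod_cast h3
      rw [← Complex.sq_norm] at h4
      exact (sq_eq_sq₀ (norm_nonneg _) hay0.le).mp h4
    constructor
    · rw [norm_div, hn']; field_simp; exact hay
    · field_simp; ring
  have hq₀ : x * conj z * u₀^2 - 2*(d:ℂ)*u₀ + z * conj x = 0 := by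
    rw [key u₀]; ring
  have hq₁ : x * conj z * u₁^2 - 2*(d:ℂ)*u₁ + z * conj x = 0 := by
    rw [key u₁]; ring
  have hSet : {p : ℂ × ℂ | ‖p.1‖ = 1 ∧ ‖p.2‖ = 1 ∧
      x * p.1 + y * p.2 = z}
      = {(u₀, (z - x*u₀)/y), (u₁, (z - x*u₁)/y)} := by
    ext ⟨u, v⟩
    simp only [Set.mem_setOf_eq, Set.mem_insert_iff, Set.mem_singleton_iff, Prod.mk.injEq]
    constructor
    · rintro ⟨hu, hv, heq⟩
      have hveq : v = (z - x*u)/y := by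
        field_simp
        linear_combination heq
      have hcu : u * conj u = 1 := by
        rw [Complex.mul_conj]
        norm_cast
        rw [← Complex.sq_norm, hu]; norm_num
      have hcv : v * conj v = 1 := by
        rw [Complex.mul_conj]
        norm_cast
        rw [← Complex.sq_norm, hv]; norm_num
      have hzxu : z - x*u = y*v := by linear_combination -heq
      have hvv : (z - x*u) * ((conj z) - (conj x)*(conj u)) = ((ay:ℝ):ℂ)^2 := by
        have h5 : (z - x*u) * conj (z - x*u) = ((ay:ℝ):ℂ)^2 := by
          rw [hzxu, map_mul]
          linear_combination (v*conj v)*hyy + (((ay:ℝ):ℂ)^2)*hcv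
        rw [map_sub, map_mul] at h5
        exact h5
      have hquad : x * conj z * u^2 - 2*(d:ℂ)*u + z * conj x = 0 := by
        linear_combination (-u) * hvv + (x*conj x*u - z*conj x) * hcu + u*hzz + u*hxx - u*hDc
      have hu01 : u = u₀ ∨ u = u₁ := by
        have hk := key u
        rw [hquad] at hk
        have h0 : (u - u₀) * (u - u₁) = 0 := by
          rcases mul_eq_zero.mp hk.symm with h | h
          · exact absurd h hc2
          · exact h
        rcases mul_eq_zero.mp h0 with h | h
        · exact Or.inl (sub_eq_zero.mp h)
        · exact Or.inr (sub_eq_zero.mp h)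
      rcases hu01 with rfl | rfl
      · exact Or.inl ⟨rfl, hveq⟩
      · exact Or.inr ⟨rfl, hveq⟩
    · rintro (⟨rfl, rfl⟩ | ⟨rfl, rfl⟩)
      · obtain ⟨hv1, heq⟩ := hmem u₀ habsu₀ hq₀
        exact ⟨habsu₀, hv1, heq⟩
      · obtain ⟨hv1, heq⟩ := hmem u₁ habsu₁ hq₁
        exact ⟨habsu₁, hv1, heq⟩
  rw [hSet]
  apply Set.encard_pair
  have hne : u₀ ≠ u₁ := by
    rw [hu₀, hu₁]
    intro hcon
    rw [div_eq_div_iff hc2 hc2] at hcon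
    have h := mul_right_cancel₀ hc2 hcon
    have him := congrArg Complex.im h
    simp at him
    exact absurd him (by linarith [he0] : ¬ (-e = e))
  exact fun hP => hne (congrArg Prod.fst hP)
end

section
/- Let N be an even natural number and a : {-N/2, ..., N/2−1} → ℂ, and let b_j = (1/(2N−1)) Σ_{k=−(N−1)}^{N−1} |F(k)|² e^{−2πi jk/(2N−1)} where F(k) = Σ_{l=−N/2}^{N/2−1} a_l e^{2πi lk/(2N−1)}. Then for every m with 0 ≤ m ≤ N−1, b_{N−1−m} = Σ_{i=0}^{m} conj(a_{−N/2+i}) · a_{N/2−1−m+i}; in particular b_{N−1} = conj(a_{−N/2}) · a_{N/2−1}. Equivalently, the vector (b_{N−1}, b_{N−2}, ..., b_0)ᵀ equals 𝒜·ā, where 𝒜 is the N×N lower-triangular Toeplitz matrix with first column (conj(a_{−N/2}), conj(a_{−N/2+1}), ..., conj(a_{N/2−1}))ᵀ and ā = (a_{N/2−1}, a_{N/2−2}, ..., a_{−N/2})ᵀ. -/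
open Finset Complex Real

lemma sum_Icc_int_eq_range (f : ℤ → ℂ) (a : ℤ) (n : ℕ) :
    ∑ k ∈ Finset.Icc a (a + n), f k = ∑ i ∈ Finset.range (n + 1), f (a + i) := by
  refine Finset.sum_nbij' (fun k => (k - a).toNat) (fun i => a + i) ?_ ?_ ?_ ?_ ?_ <;>
    intros x hx <;> simp_all [Finset.mem_Icc, Finset.mem_range] <;> omega



open Finset Complex Real

lemma geom_dft (N : ℕ) (hN : 0 < N) (d : ℤ) :
    ∑ k ∈ Finset.Icc (-((N : ℤ) - 1)) ((N : ℤ) - 1),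
      Complex.exp (2 * (Real.pi : ℂ) * Complex.I * (d : ℂ) * (k : ℂ) / (2 * (N : ℂ) - 1)) =
    if (2 * (N : ℤ) - 1) ∣ d then 2 * (N : ℂ) - 1 else 0 := by
  have hc : (2 * (N : ℂ) - 1) ≠ 0 := by
    have : ((2 * (N : ℤ) - 1 : ℤ) : ℂ) ≠ 0 := by
      rw [Int.cast_ne_zero]; omega
    push_cast at this; exact this
  have hIcc : Finset.Icc (-((N : ℤ) - 1)) ((N : ℤ) - 1)
      = Finset.Icc (-((N : ℤ) - 1)) (-((N : ℤ) - 1) + (2 * N - 2 : ℕ)) := by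
    congr 1; omega
  split_ifs with hdvd
  · obtain ⟨t, ht⟩ := hdvd
    have hterm : ∀ k ∈ Finset.Icc (-((N : ℤ) - 1)) ((N : ℤ) - 1),
        Complex.exp (2 * (Real.pi : ℂ) * Complex.I * (d : ℂ) * (k : ℂ) / (2 * (N : ℂ) - 1))
          = 1 := by
      intro k _
      have : 2 * (Real.pi : ℂ) * Complex.I * (d : ℂ) * (k : ℂ) / (2 * (N : ℂ) - 1)
          = ((t * k : ℤ) : ℂ) * (2 * (Real.pi : ℂ) * Complex.I) := by
        rw [ht]; push_cast; field_simp
      rw [this, Complex.exp_int_mul_two_pi_mul_I]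
    rw [Finset.sum_congr rfl hterm, Finset.sum_const, Int.card_Icc]
    have : ((N:ℤ) - 1 + 1 - -((N:ℤ)-1)).toNat = 2 * N - 1 := by omega
    rw [this, nsmul_eq_mul, mul_one, Nat.cast_sub (by omega : 1 ≤ 2 * N)]
    push_cast
    ring
  · set ζ := Complex.exp (2 * (Real.pi : ℂ) * Complex.I * (d : ℂ) / (2 * (N : ℂ) - 1)) with hζ
    have hζ1 : ζ ≠ 1 := by
      rw [hζ, Ne, Complex.exp_eq_one_iff]
      rintro ⟨n, hn⟩
      apply hdvd
      refine ⟨n, ?_⟩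
      have h2 : (d : ℂ) = (n : ℂ) * (2 * (N : ℂ) - 1) := by
        have hpi : (Real.pi : ℂ) ≠ 0 := by
          simpa using Real.pi_ne_zero
        field_simp at hn
        refine mul_left_cancel₀ (a := 2 * (Real.pi : ℂ) * Complex.I)
          (by simp [hpi, Complex.I_ne_zero]) ?_
        rw [hn]; ring
      have : ((d : ℤ) : ℂ) = ((2 * (N:ℤ) - 1) * n : ℤ) := by push_cast; rw [h2]; ring
      exact_mod_cast this
    rw [hIcc, sum_Icc_int_eq_range]
    have hterm : ∀ i ∈ Finset.range (2 * N - 2 + 1),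
        Complex.exp (2 * (Real.pi : ℂ) * Complex.I * (d : ℂ) * ((-((N : ℤ) - 1) + i : ℤ) : ℂ)
          / (2 * (N : ℂ) - 1))
        = Complex.exp (2 * (Real.pi : ℂ) * Complex.I * (d : ℂ) * ((-((N : ℤ) - 1) : ℤ) : ℂ)
          / (2 * (N : ℂ) - 1)) * ζ ^ i := by
      intro i _
      rw [hζ, ← Complex.exp_nat_mul, ← Complex.exp_add]
      congr 1
      push_cast
      field_simp
    rw [Finset.sum_congr rfl hterm, ← Finset.mul_sum, geom_sum_eq hζ1]
    have hpow : ζ ^ (2 * N - 2 + 1) = 1 := by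
      rw [hζ, ← Complex.exp_nat_mul]
      have : ((2 * N - 2 + 1 : ℕ) : ℂ) = 2 * (N : ℂ) - 1 := by
        push_cast [Nat.cast_sub (by omega : 2 ≤ 2 * N)]; ring
      rw [this]
      have : (2 * (N : ℂ) - 1) * (2 * (Real.pi : ℂ) * Complex.I * (d : ℂ) / (2 * (N : ℂ) - 1))
          = (d : ℂ) * (2 * (Real.pi : ℂ) * Complex.I) := by field_simp
      rw [this, Complex.exp_int_mul_two_pi_mul_I]
    rw [hpow]
    simp

lemma key_dft (N : ℕ) (hN : Even N) (hpos : 0 < N) (a F b : ℤ → ℂ)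
    (hF : ∀ k : ℤ, F k = ∑ l ∈ Finset.Icc (-((N : ℤ) / 2)) ((N : ℤ) / 2 - 1),
        a l * Complex.exp (2 * (Real.pi : ℂ) * Complex.I * (l : ℂ) * (k : ℂ) / (2 * (N : ℂ) - 1)))
    (hb : ∀ j : ℤ, b j = (1 / (2 * (N : ℂ) - 1)) *
        ∑ k ∈ Finset.Icc (-((N : ℤ) - 1)) ((N : ℤ) - 1),
          (‖F k‖ : ℂ) ^ 2 *
            Complex.exp (-(2 * (Real.pi : ℂ) * Complex.I * (j : ℂ) * (k : ℂ)) / (2 * (N : ℂ) - 1)))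
    (m : ℕ) (hm : m < N) :
    b ((N : ℤ) - 1 - m) = ∑ i ∈ Finset.range (m + 1),
      (starRingEnd ℂ) (a (-((N : ℤ) / 2) + i)) * a ((N : ℤ) / 2 - 1 - m + i) := by
  obtain ⟨n, hn⟩ := hN
  have hNZ : (N : ℤ) = n + n := by exact_mod_cast congrArg (Nat.cast : ℕ → ℤ) hn
  have hn2 : ((N : ℤ) / 2) = n := by omega
  have hnpos : 0 < n := by omega
  set S : Finset ℤ := Finset.Icc (-((N : ℤ) / 2)) ((N : ℤ) / 2 - 1) with hS
  set j : ℤ := (N : ℤ) - 1 - m with hj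
  have hc : (2 * (N : ℂ) - 1) ≠ 0 := by
    have : ((2 * (N : ℤ) - 1 : ℤ) : ℂ) ≠ 0 := by rw [Int.cast_ne_zero]; omega
    push_cast at this; exact this
  have hprod : ∀ k : ℤ,
      (‖F k‖ : ℂ) ^ 2 *
          Complex.exp (-(2 * (Real.pi : ℂ) * Complex.I * (j : ℂ) * (k : ℂ)) / (2 * (N : ℂ) - 1))
        = ∑ l ∈ S, ∑ l' ∈ S, (a l * (starRingEnd ℂ) (a l')) *
            Complex.exp (2 * (Real.pi : ℂ) * Complex.I * ((l - l' - j : ℤ) : ℂ) * (k : ℂ)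
              / (2 * (N : ℂ) - 1)) := by
    intro k
    have habs : ((‖F k‖ : ℝ) : ℂ) ^ 2 = F k * (starRingEnd ℂ) (F k) := by
      rw [← Complex.ofReal_pow, Complex.sq_norm, Complex.mul_conj]
    rw [habs, hF k, map_sum, Finset.sum_mul_sum, Finset.sum_mul]
    refine Finset.sum_congr rfl fun l _ => ?_
    rw [Finset.sum_mul]
    refine Finset.sum_congr rfl fun l' _ => ?_
    rw [map_mul]
    rw [← Complex.exp_conj]
    have hconjB : (starRingEnd ℂ) (2 * (Real.pi : ℂ) * Complex.I * (l' : ℂ) * (k : ℂ)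
        / (2 * (N : ℂ) - 1))
        = -(2 * (Real.pi : ℂ) * Complex.I * (l' : ℂ) * (k : ℂ) / (2 * (N : ℂ) - 1)) := by
      simp [map_div₀, map_mul, map_ofNat, Complex.conj_I, Complex.conj_ofReal]
      ring
    rw [hconjB]
    rw [show a l * Complex.exp (2 * (Real.pi : ℂ) * Complex.I * (l : ℂ) * (k : ℂ)
          / (2 * (N : ℂ) - 1)) *
        ((starRingEnd ℂ) (a l') *
          Complex.exp (-(2 * (Real.pi : ℂ) * Complex.I * (l' : ℂ) * (k : ℂ)
            / (2 * (N : ℂ) - 1)))) *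
        Complex.exp (-(2 * (Real.pi : ℂ) * Complex.I * (j : ℂ) * (k : ℂ)) / (2 * (N : ℂ) - 1))
      = (a l * (starRingEnd ℂ) (a l')) *
        (Complex.exp (2 * (Real.pi : ℂ) * Complex.I * (l : ℂ) * (k : ℂ) / (2 * (N : ℂ) - 1)) *
         Complex.exp (-(2 * (Real.pi : ℂ) * Complex.I * (l' : ℂ) * (k : ℂ) / (2 * (N : ℂ) - 1))) *
         Complex.exp (-(2 * (Real.pi : ℂ) * Complex.I * (j : ℂ) * (k : ℂ)) / (2 * (N : ℂ) - 1)))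
      from by ring]
    congr 1
    rw [← Complex.exp_add, ← Complex.exp_add]
    congr 1
    push_cast
    field_simp
    ring
  rw [hb, Finset.sum_congr rfl fun k _ => hprod k, Finset.sum_comm]
  rw [Finset.sum_congr rfl fun l (_ : l ∈ S) => Finset.sum_comm (γ := ℤ)]
  have hgeom : ∀ l ∈ S, ∀ l' ∈ S,
      ∑ k ∈ Finset.Icc (-((N : ℤ) - 1)) ((N : ℤ) - 1),
        (a l * (starRingEnd ℂ) (a l')) *
          Complex.exp (2 * (Real.pi : ℂ) * Complex.I * ((l - l' - j : ℤ) : ℂ) * (k : ℂ)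
            / (2 * (N : ℂ) - 1))
      = if l = l' + j then (a l * (starRingEnd ℂ) (a l')) * (2 * (N : ℂ) - 1) else 0 := by
    intro l hl l' hl'
    rw [← Finset.mul_sum, geom_dft N hpos]
    rw [hS, Finset.mem_Icc] at hl hl'
    have hiff : (2 * (N : ℤ) - 1) ∣ (l - l' - j) ↔ l = l' + j := by
      constructor
      · rintro ⟨t, ht⟩
        rcases lt_trichotomy t 0 with h | h | h
        · exfalso; nlinarith [hl.1, hl.2, hl'.1, hl'.2]
        · subst h; simp only [mul_zero] at ht; omega
        · exfalso; nlinarith [hl.1, hl.2, hl'.1, hl'.2]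
      · intro h; exact ⟨0, by omega⟩
    by_cases h : l = l' + j
    · rw [if_pos ((hiff.mpr h) ), if_pos h]
    · rw [if_neg (fun hd => h (hiff.mp hd)), if_neg h, mul_zero]
  rw [Finset.sum_congr rfl fun l hl => Finset.sum_congr rfl fun y hy => hgeom l hl y hy]
  have hcollapse : ∀ l ∈ S,
      (∑ y ∈ S, if l = y + j then a l * (starRingEnd ℂ) (a y) * (2 * (N : ℂ) - 1) else 0)
      = if l - j ∈ S then a l * (starRingEnd ℂ) (a (l - j)) * (2 * (N : ℂ) - 1) else 0 := by
    intro l _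
    rw [Finset.sum_congr rfl fun y _ =>
      if_congr (show (l = y + j) ↔ (y = l - j) by omega) rfl rfl]
    exact Finset.sum_ite_eq' S (l - j) _
  rw [Finset.sum_congr rfl hcollapse, ← Finset.sum_filter]
  have hfilt : S.filter (fun l => l - j ∈ S)
      = Finset.Icc ((n : ℤ) - 1 - m) (((n : ℤ) - 1 - m) + (m : ℕ)) := by
    ext x
    simp only [hS, Finset.mem_filter, Finset.mem_Icc]
    omega
  rw [hfilt, sum_Icc_int_eq_range, ← Finset.sum_mul]
  rw [mul_comm (1 / (2 * (N : ℂ) - 1)), mul_assoc, mul_one_div, div_self hc, mul_one]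
  refine Finset.sum_congr rfl fun i _ => ?_
  have h1 : ((n : ℤ) - 1 - m + i) - j = -((N : ℤ) / 2) + i := by omega
  have h2 : ((n : ℤ) - 1 - m + i) = (N : ℤ) / 2 - 1 - m + i := by omega
  rw [h1, h2, mul_comm]



/-- For even `N`, with `F` the zero-padded `(2N-1)`-point DFT of `a` and
`b j` the `j`-th discrete Fourier coefficient of `|F|²`, for every `0 ≤ m ≤ N-1` one has
`b (N-1-m) = ∑_{i=0}^{m} conj (a (-N/2+i)) · a (N/2-1-m+i)`; in particular
`b (N-1) = conj (a (-N/2)) · a (N/2-1)`.  (This is the matrix equation `𝒜·ā = b⃗`, read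
row by row, where `𝒜` is the lower-triangular Toeplitz matrix built from `conj ∘ a`.) -/
theorem dft_autocorrelation_triangular_system (N : ℕ) (hN : Even N) (a F b : ℤ → ℂ)
    (hF : ∀ k : ℤ, F k = ∑ l ∈ Finset.Icc (-((N : ℤ) / 2)) ((N : ℤ) / 2 - 1),
        a l * Complex.exp (2 * (Real.pi : ℂ) * Complex.I * (l : ℂ) * (k : ℂ) / (2 * (N : ℂ) - 1)))
    (hb : ∀ j : ℤ, b j = (1 / (2 * (N : ℂ) - 1)) *
        ∑ k ∈ Finset.Icc (-((N : ℤ) - 1)) ((N : ℤ) - 1),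
          (‖F k‖ : ℂ) ^ 2 *
            Complex.exp (-(2 * (Real.pi : ℂ) * Complex.I * (j : ℂ) * (k : ℂ)) / (2 * (N : ℂ) - 1))) :
    (∀ m : ℕ, m < N →
        b ((N : ℤ) - 1 - m) = ∑ i ∈ Finset.range (m + 1),
          (starRingEnd ℂ) (a (-((N : ℤ) / 2) + i)) * a ((N : ℤ) / 2 - 1 - m + i)) ∧
      (0 < N → b ((N : ℤ) - 1) = (starRingEnd ℂ) (a (-((N : ℤ) / 2))) * a ((N : ℤ) / 2 - 1)) := by
  constructor
  · intro m hm
    exact key_dft N hN (by omega) a F b hF hb m hm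
  · intro hpos
    have h := key_dft N hN hpos a F b hF hb 0 hpos
    simpa using h
end
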